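/- Let (Ω, μ) be a probability space and φ : Ω → ℂ a nonvanishing measurable function in L¹(μ), and let 2 < p < ∞. Suppose that for all measurable sets F₁, F₂ of positive measure, (∫_{F₁} |φ|^{p-1} dμ)/(∫_{F₁} |φ| dμ) = (∫_{F₂} |φ|^{p-1} dμ)/(∫_{F₂} |φ| dμ), with all integrals finite and positive. Then |φ| is a.e. equal to a constant C > 0. -/

import Mathlib

open MeasureTheory
open scoped ENNReal

theorem stmt_14 {Ω : Type*} [MeasurableSpace Ω] (μ : Measure Ω) [IsProbabilityMeasure μ]
    (φ : Ω → ℂ) (hφ : Measurable φ) (hφ1 : Integrable φ μ)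
    (hnv : ∀ᵐ ω ∂μ, φ ω ≠ 0)
    (p : ℝ) (hp : 2 < p)
    (hfin : ∀ F : Set Ω, MeasurableSet F → 0 < μ F →
      (IntegrableOn (fun ω => ‖φ ω‖ ^ (p - 1)) F μ ∧
        0 < ∫ ω in F, ‖φ ω‖ ^ (p - 1) ∂μ ∧
        0 < ∫ ω in F, ‖φ ω‖ ∂μ))
    (hratio : ∀ F₁ F₂ : Set Ω, MeasurableSet F₁ → MeasurableSet F₂ →
      0 < μ F₁ → 0 < μ F₂ →
      (∫ ω in F₁, ‖φ ω‖ ^ (p - 1) ∂μ) / (∫ ω in F₁, ‖φ ω‖ ∂μ) =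
      (∫ ω in F₂, ‖φ ω‖ ^ (p - 1) ∂μ) / (∫ ω in F₂, ‖φ ω‖ ∂μ)) :
    ∃ C : ℝ, 0 < C ∧ ∀ᵐ ω ∂μ, ‖φ ω‖ = C := by
  have huniv : (0 : ℝ≥0∞) < μ Set.univ := by simp
  obtain ⟨hint, hpos, hpos'⟩ := hfin Set.univ MeasurableSet.univ huniv
  simp only [Measure.restrict_univ, IntegrableOn] at hint hpos hpos'
  set R : ℝ := (∫ ω, ‖φ ω‖ ^ (p - 1) ∂μ) / (∫ ω, ‖φ ω‖ ∂μ) with hR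
  have hRpos : 0 < R := div_pos hpos hpos'
  have habs : Integrable (fun ω => ‖φ ω‖) μ := by
    simpa using hφ1.norm
  have hf : Integrable (fun ω => ‖φ ω‖ ^ (p - 1) - R * ‖φ ω‖) μ :=
    hint.sub (habs.const_mul R)
  have hzero : (fun ω => ‖φ ω‖ ^ (p - 1) - R * ‖φ ω‖) =ᵐ[μ] 0 := by
    apply hf.ae_eq_zero_of_forall_setIntegral_eq_zero
    intro s hs _
    rcases eq_or_lt_of_le (zero_le (a := μ s)) with h0 | h0
    · have hr0 : μ.restrict s = 0 := Measure.restrict_eq_zero.mpr h0.symm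
      simp [hr0]
    · obtain ⟨hintS, _, hposS⟩ := hfin s hs h0
      have hratioS := hratio s Set.univ hs MeasurableSet.univ h0 huniv
      simp only [Measure.restrict_univ] at hratioS
      have heq : (∫ ω in s, ‖φ ω‖ ^ (p - 1) ∂μ) =
          R * ∫ ω in s, ‖φ ω‖ ∂μ := by
        rw [← hR] at hratioS
        field_simp at hratioS
        linarith [hratioS]
      rw [integral_sub hintS ((habs.integrableOn).const_mul R), integral_const_mul, heq,
        sub_self]
  refine ⟨R ^ (p - 2)⁻¹, Real.rpow_pos_of_pos hRpos _, ?_⟩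
  filter_upwards [hzero, hnv] with ω h1 h2
  have hx : 0 < ‖φ ω‖ := by
    exact norm_pos_iff.mpr h2
  have h1' : ‖φ ω‖ ^ (p - 1) = R * ‖φ ω‖ := by
    have := sub_eq_zero.mp (by simpa using h1)
    linarith [this]
  have hsplit : ‖φ ω‖ ^ (p - 1) =
      ‖φ ω‖ ^ (p - 2) * ‖φ ω‖ := by
    have hpe : p - 1 = (p - 2) + 1 := by ring
    rw [hpe, Real.rpow_add hx, Real.rpow_one]
  have hkey : ‖φ ω‖ ^ (p - 2) = R := by
    have := h1'.symm.trans hsplit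
    exact mul_right_cancel₀ hx.ne' this.symm
  have := congrArg (fun x => x ^ (p - 2)⁻¹) hkey
  simpa [Real.rpow_rpow_inv hx.le (by linarith : p - 2 ≠ 0)] using this
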